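/- arXiv:2006.13355 — 4 statements merged into one kernel-verified Lean document; each statement's English description precedes it below -/
import Mathlib

section
/- For any integers d ≥ 2 and Q ≥ 2 with d dividing Q, and any integer a with gcd(a, d) = 1, the bias constants satisfy the anti-symmetry R_Q(d; −a) = −R_Q(d; a), where R_Q(d; −a) denotes the bias constant attached to the residue class of −a modulo d. -/
/-- The least positive residue of `n` modulo `Q`: the unique integer in `[1, Q]`
congruent to `n` mod `Q` (for `Q ≥ 1`). -/
def lpr (Q : ℕ) (n : ℤ) : ℤ := (n - 1) % Q + 1

/-- `R*_Q(d;a) = (1/φ(Q)²) Σ_{s,t=1..Q, gcd(st,Q)=1, s ≡ a (mod d)} ⟨t-s⟩_Q`. -/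
def Rstar (Q d : ℕ) (a : ℤ) : ℚ :=
  (1 / (Nat.totient Q : ℚ) ^ 2) *
    ∑ s ∈ Finset.Icc 1 Q, ∑ t ∈ Finset.Icc 1 Q,
      if Nat.gcd (s * t) Q = 1 ∧ (s : ℤ) ≡ a [ZMOD d] then (lpr Q ((t : ℤ) - (s : ℤ)) : ℚ) else 0

/-- `R̄_Q(d) = (1/φ(d)) (Q/φ(Q)) (φ(Q)+1)/2`. -/
def Rbar (Q d : ℕ) : ℚ :=
  (1 / (Nat.totient d : ℚ)) * ((Q : ℚ) / (Nat.totient Q : ℚ)) * (((Nat.totient Q : ℚ) + 1) / 2)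

/-- The bias constant `R_Q(d;a) = R*_Q(d;a) - R̄_Q(d)`. -/
def Rbias (Q d : ℕ) (a : ℤ) : ℚ := Rstar Q d a - Rbar Q d

lemma lpr_add_lpr_neg (Q : ℕ) (hQ : 2 ≤ Q) (x : ℤ) :
    lpr Q x + lpr Q (-x) = if (Q:ℤ) ∣ x then 2*Q else Q := by
  have hQ0 : (0:ℤ) < Q := by exact_mod_cast Nat.lt_of_lt_of_le Nat.zero_lt_two hQ
  unfold lpr
  by_cases h : (Q:ℤ) ∣ x
  · obtain ⟨k, rfl⟩ := h
    have h1 : ((Q:ℤ)*k - 1) % Q = Q - 1 := by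
      have e : (Q:ℤ)*k - 1 = (Q - 1) + Q*(k-1) := by ring
      rw [e, Int.add_mul_emod_self_left, Int.emod_eq_of_lt (by omega) (by omega)]
    have h2 : (-((Q:ℤ)*k) - 1) % Q = Q - 1 := by
      have e : -((Q:ℤ)*k) - 1 = (Q - 1) + Q*(-k-1) := by ring
      rw [e, Int.add_mul_emod_self_left, Int.emod_eq_of_lt (by omega) (by omega)]
    rw [h1, h2, if_pos ⟨k, rfl⟩]; push_cast; ring
  · rw [if_neg h]
    have hd := Int.emod_add_mul_ediv (x-1) Q
    have hr0 : 0 ≤ (x-1) % Q := Int.emod_nonneg _ (by omega)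
    have hr1 : (x-1) % Q < Q := Int.emod_lt_of_pos _ hQ0
    have hrQ : (x-1) % Q ≠ Q - 1 := by
      intro hc
      exact h ⟨(x-1)/Q + 1, by rw [mul_add, mul_one]; omega⟩
    have h2 : (-x - 1) % Q = Q - (x-1) % Q - 2 := by
      have e : -x - 1 = (Q - (x-1) % Q - 2) + Q * (-((x-1)/Q) - 1) := by
        have e2 : (Q:ℤ) * (-((x-1)/Q) - 1) = -(Q*((x-1)/Q)) - Q := by ring
        rw [e2]; omega
      rw [e, Int.add_mul_emod_self_left, Int.emod_eq_of_lt (by omega) (by omega)]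
    rw [h2]; omega

lemma fiber_card (d Q : ℕ) [NeZero d] [NeZero Q] (hdQ : d ∣ Q) (y : (ZMod d)ˣ) :
    Nat.totient d * (Finset.univ.filter
      (fun u : (ZMod Q)ˣ => ZMod.unitsMap hdQ u = y)).card = Nat.totient Q := by
  classical
  have hsurj := ZMod.unitsMap_surjective (n := d) hdQ
  obtain ⟨u0, hu0⟩ := hsurj y
  have e : {u : (ZMod Q)ˣ // ZMod.unitsMap hdQ u = y} ≃ (ZMod.unitsMap hdQ).ker :=
    { toFun := fun x => ⟨u0⁻¹ * x.1, by
        simp [MonoidHom.mem_ker, map_mul, hu0, x.2]⟩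
      invFun := fun k => ⟨u0 * k.1, by
        have hk := k.2
        rw [MonoidHom.mem_ker] at hk
        simp [map_mul, hu0, hk]⟩
      left_inv := fun x => by simp
      right_inv := fun k => by simp }
  have hcard : (Finset.univ.filter
      (fun u : (ZMod Q)ˣ => ZMod.unitsMap hdQ u = y)).card
      = Nat.card (ZMod.unitsMap hdQ).ker := by
    rw [← Fintype.card_subtype, Nat.card_eq_fintype_card]
    exact Fintype.card_congr e
  have h1 : Nat.card ((ZMod.unitsMap hdQ).ker) * (ZMod.unitsMap hdQ).ker.index
      = Nat.card (ZMod Q)ˣ := Subgroup.card_mul_index _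
  have h2 : (ZMod.unitsMap hdQ).ker.index = Nat.card (ZMod d)ˣ := by
    rw [Subgroup.index_ker, MonoidHom.range_eq_top_of_surjective _ hsurj, Subgroup.card_top]
  rw [hcard, mul_comm, ← ZMod.card_units_eq_totient, ← ZMod.card_units_eq_totient,
    ← Nat.card_eq_fintype_card, ← Nat.card_eq_fintype_card, ← h2, h1]

lemma card_A (d Q : ℕ) (hd : 2 ≤ d) (hQ : 2 ≤ Q) (hdQ : d ∣ Q) (a : ℤ)
    (ha : Int.gcd a d = 1) :
    Nat.totient d * ((Finset.Icc 1 Q).filter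
      (fun s => Nat.gcd s Q = 1 ∧ (s:ℤ) ≡ a [ZMOD d])).card = Nat.totient Q := by
  classical
  haveI : NeZero Q := ⟨by omega⟩
  haveI : NeZero d := ⟨by omega⟩
  haveI : Fact (1 < Q) := ⟨by omega⟩
  have hau : IsUnit ((a : ZMod d)) := by
    have hb := Int.gcd_eq_gcd_ab a d
    rw [ha] at hb
    refine IsUnit.of_mul_eq_one ((Int.gcdA a d : ZMod d)) ?_
    push_cast at hb
    have h3 : (a * Int.gcdA a d : ℤ) = 1 - d * Int.gcdB a d := by linarith
    have : ((a * Int.gcdA a d : ℤ) : ZMod d) = ((1 - d * Int.gcdB a d : ℤ) : ZMod d) := by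
      rw [h3]
    push_cast at this
    simpa [ZMod.natCast_self] using this
  rw [← fiber_card d Q hdQ hau.unit]
  congr 1
  have hlt : ∀ s ∈ (Finset.Icc 1 Q).filter
      (fun s => Nat.gcd s Q = 1 ∧ (s:ℤ) ≡ a [ZMOD d]), s < Q := by
    intro s hs
    simp only [Finset.mem_filter, Finset.mem_Icc] at hs
    rcases Nat.lt_or_ge s Q with h | h
    · exact h
    · exfalso
      have : s = Q := le_antisymm hs.1.2 h
      rw [this, Nat.gcd_self] at hs
      omega
  apply Finset.card_bij (i := fun s hs => ZMod.unitOfCoprime s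
    (by simp only [Finset.mem_filter, Finset.mem_Icc] at hs; exact hs.2.1))
  · intro s hs
    simp only [Finset.mem_filter, Finset.mem_univ, true_and]
    apply Units.ext
    simp only [ZMod.unitsMap_def, Units.coe_map, MonoidHom.coe_coe, ZMod.coe_unitOfCoprime,
      IsUnit.unit_spec, map_natCast]
    simp only [Finset.mem_filter, Finset.mem_Icc] at hs
    have := hs.2.2
    rw [← ZMod.intCast_eq_intCast_iff] at this
    exact_mod_cast this
  · intro s1 hs1 s2 hs2 h
    have h1 : ((s1 : ℕ) : ZMod Q) = ((s2 : ℕ) : ZMod Q) := by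
      have := congrArg (fun u : (ZMod Q)ˣ => (u : ZMod Q)) h
      simpa [ZMod.coe_unitOfCoprime] using this
    rw [ZMod.natCast_eq_natCast_iff] at h1
    have e1 := hlt s1 hs1
    have e2 := hlt s2 hs2
    unfold Nat.ModEq at h1
    rwa [Nat.mod_eq_of_lt e1, Nat.mod_eq_of_lt e2] at h1
  · intro u hu
    simp only [Finset.mem_filter, Finset.mem_univ, true_and] at hu
    refine ⟨(u : ZMod Q).val, ?_, ?_⟩
    · have hcop := ZMod.val_coe_unit_coprime u
      have hvlt : (u : ZMod Q).val < Q := ZMod.val_lt _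
      have hv1 : 1 ≤ (u : ZMod Q).val := by
        rcases Nat.eq_zero_or_pos (u : ZMod Q).val with h0 | h0
        · exfalso
          have : (u : ZMod Q) = 0 := by
            rw [← ZMod.natCast_rightInverse (u : ZMod Q), h0]; simp
          exact u.ne_zero this
        · exact h0
      simp only [Finset.mem_filter, Finset.mem_Icc]
      refine ⟨⟨hv1, hvlt.le⟩, hcop, ?_⟩
      have hcast : (((u : ZMod Q).val : ℕ) : ZMod d) = (a : ZMod d) := by
        have := congrArg (fun w : (ZMod d)ˣ => (w : ZMod d)) hu
        simp only [ZMod.unitsMap_def, Units.coe_map, MonoidHom.coe_coe,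
          IsUnit.unit_spec] at this
        rw [← this, ← ZMod.natCast_rightInverse (u : ZMod Q), map_natCast]
        simp
      rw [← ZMod.intCast_eq_intCast_iff]
      exact_mod_cast hcast
    · apply Units.ext
      simp [ZMod.coe_unitOfCoprime, ZMod.natCast_rightInverse (u : ZMod Q)]

theorem rstar_add (d Q : ℕ) (hd : 2 ≤ d) (hQ : 2 ≤ Q) (hdQ : d ∣ Q)
    (a : ℤ) (ha : Int.gcd a d = 1) :
    Rstar Q d a + Rstar Q d (-a) = 2 * Rbar Q d := by
  classical
  set T : Finset ℕ := (Finset.Icc 1 Q).filter (fun t => Nat.gcd t Q = 1) with hTdef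
  set A : ℤ → Finset ℕ := fun b => (Finset.Icc 1 Q).filter
    (fun s => Nat.gcd s Q = 1 ∧ (s:ℤ) ≡ b [ZMOD d]) with hAdef
  have hS : ∀ b : ℤ, (∑ s ∈ Finset.Icc 1 Q, ∑ t ∈ Finset.Icc 1 Q,
      if Nat.gcd (s * t) Q = 1 ∧ (s : ℤ) ≡ b [ZMOD d]
        then (lpr Q ((t : ℤ) - (s : ℤ)) : ℚ) else 0)
      = ∑ s ∈ A b, ∑ t ∈ T, (lpr Q ((t : ℤ) - (s : ℤ)) : ℚ) := by
    intro b
    rw [hAdef]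
    rw [Finset.sum_filter]
    apply Finset.sum_congr rfl
    intro s _
    by_cases hP : Nat.gcd s Q = 1 ∧ (s:ℤ) ≡ b [ZMOD d]
    · rw [if_pos hP, hTdef, Finset.sum_filter]
      apply Finset.sum_congr rfl
      intro t _
      by_cases hR : Nat.gcd t Q = 1
      · rw [if_pos hR, if_pos ⟨Nat.Coprime.mul hP.1 hR, hP.2⟩]
      · rw [if_neg hR, if_neg]
        intro hc
        exact hR (Nat.Coprime.coprime_dvd_left (dvd_mul_left t s) hc.1)
    · rw [if_neg hP]
      apply Finset.sum_eq_zero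
      intro t _
      rw [if_neg]
      intro hc
      exact hP ⟨Nat.Coprime.coprime_dvd_left (dvd_mul_right s t) hc.1, hc.2⟩
  have hltQ : ∀ s, Nat.gcd s Q = 1 → s ≤ Q → s < Q := by
    intro s h1 h2
    rcases Nat.lt_or_ge s Q with h | h
    · exact h
    · exfalso; have : s = Q := le_antisymm h2 h
      rw [this, Nat.gcd_self] at h1; omega
  have hTmem : ∀ t ∈ T, 1 ≤ t ∧ t < Q ∧ Nat.gcd t Q = 1 := by
    intro t ht
    simp only [hTdef, Finset.mem_filter, Finset.mem_Icc] at ht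
    exact ⟨ht.1.1, hltQ t ht.2 ht.1.2, ht.2⟩
  have hAmem : ∀ (b : ℤ), ∀ s ∈ A b, 1 ≤ s ∧ s < Q ∧ Nat.gcd s Q = 1
      ∧ (s:ℤ) ≡ b [ZMOD d] := by
    intro b s hs
    simp only [hAdef, Finset.mem_filter, Finset.mem_Icc] at hs
    exact ⟨hs.1.1, hltQ s hs.2.1 hs.1.2, hs.2.1, hs.2.2⟩
  have hmemT : ∀ t ∈ T, Q - t ∈ T := by
    intro t ht
    obtain ⟨h1, h2, h3⟩ := hTmem t ht
    simp only [hTdef, Finset.mem_filter, Finset.mem_Icc]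
    exact ⟨⟨by omega, by omega⟩, (Nat.coprime_self_sub_left (by omega)).mpr h3⟩
  have hmemA : ∀ (b : ℤ), ∀ s ∈ A b, Q - s ∈ A (-b) := by
    intro b s hs
    obtain ⟨h1, h2, h3, h4⟩ := hAmem b s hs
    simp only [hAdef, Finset.mem_filter, Finset.mem_Icc]
    refine ⟨⟨by omega, by omega⟩, (Nat.coprime_self_sub_left (by omega)).mpr h3, ?_⟩
    have hcast : ((Q - s : ℕ) : ℤ) = (Q : ℤ) - s := by
      push_cast [Nat.cast_sub (by omega : s ≤ Q)]; ring
    rw [hcast]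
    have hq0 : (Q : ℤ) ≡ 0 [ZMOD d] := Int.modEq_zero_iff_dvd.mpr
      (by exact_mod_cast Int.natCast_dvd_natCast.mpr hdQ)
    simpa using hq0.sub h4
  -- Step 3 : reflection
  have key : ∑ s ∈ A (-a), ∑ t ∈ T, (lpr Q ((t:ℤ) - s) : ℚ)
      = ∑ s ∈ A a, ∑ t ∈ T, (lpr Q ((s:ℤ) - t) : ℚ) := by
    refine Finset.sum_nbij' (i := fun s => Q - s) (j := fun s => Q - s)
      (fun s hs => by simpa using hmemA (-a) s hs)
      (fun s hs => hmemA a s hs)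
      (fun s hs => by have := (hAmem _ s hs).2.1; show Q - (Q - s) = s; omega)
      (fun s hs => by have := (hAmem _ s hs).2.1; show Q - (Q - s) = s; omega)
      (fun s hs => ?_)
    obtain ⟨hs1, hs2, _, _⟩ := hAmem _ s hs
    refine Finset.sum_nbij' (i := fun t => Q - t) (j := fun t => Q - t)
      (fun t ht => hmemT t ht) (fun t ht => hmemT t ht)
      (fun t ht => by have := (hTmem t ht).2.1; show Q - (Q - t) = t; omega)
      (fun t ht => by have := (hTmem t ht).2.1; show Q - (Q - t) = t; omega)
      (fun t ht => ?_)
    obtain ⟨ht1, ht2, _⟩ := hTmem t ht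
    congr 2
    push_cast [Nat.cast_sub (by omega : s ≤ Q), Nat.cast_sub (by omega : t ≤ Q)]
    ring
  -- Step 4 : inner sums
  have hfinal : ∀ s ∈ A a, ((∑ t ∈ T, (lpr Q ((t:ℤ)-s):ℚ)) + ∑ t ∈ T, (lpr Q ((s:ℤ)-t):ℚ))
      = (Q:ℚ) * T.card + Q := by
    intro s hs
    obtain ⟨hs1, hs2, hs3, _⟩ := hAmem a s hs
    have hsT : s ∈ T := by
      simp only [hTdef, Finset.mem_filter, Finset.mem_Icc]
      exact ⟨⟨hs1, hs2.le⟩, hs3⟩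
    rw [← Finset.sum_add_distrib]
    have hpt : ∀ t ∈ T, (lpr Q ((t:ℤ)-s):ℚ) + (lpr Q ((s:ℤ)-t):ℚ)
        = (Q:ℚ) + (if t = s then (Q:ℚ) else 0) := by
      intro t ht
      obtain ⟨ht1, ht2, _⟩ := hTmem t ht
      have hx := lpr_add_lpr_neg Q hQ ((t:ℤ) - s)
      have hneg : -((t:ℤ)-s) = (s:ℤ)-t := by ring
      rw [hneg] at hx
      by_cases he : t = s
      · subst he
        rw [if_pos (by simp)] at hx
        rw [if_pos rfl]
        have hx' : lpr Q ((t:ℤ)-t) + lpr Q ((t:ℤ)-t) = (Q:ℤ) + Q := by omega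
        exact_mod_cast hx'
      · rw [if_neg (fun hdvd => he ?_)] at hx
        · rw [if_neg he, add_zero]
          exact_mod_cast hx
        · have : (t:ℤ) - s = 0 := Int.eq_zero_of_abs_lt_dvd hdvd (by
            rw [abs_lt]; omega)
          omega
    rw [Finset.sum_congr rfl hpt, Finset.sum_add_distrib, Finset.sum_const,
      Finset.sum_ite_eq' T s (fun _ => (Q:ℚ)), if_pos hsT]
    simp [mul_comm]
  -- cardinalities
  have hTcard : T.card = Nat.totient Q := by
    have hTeq : T = (Finset.range Q).filter (fun x => Q.Coprime x) := by
      ext x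
      simp only [hTdef, Finset.mem_filter, Finset.mem_Icc, Finset.mem_range]
      constructor
      · rintro ⟨⟨h1, h2⟩, h3⟩
        exact ⟨hltQ x h3 h2, Nat.coprime_comm.mp h3⟩
      · rintro ⟨h1, h2⟩
        have h3 : Nat.gcd x Q = 1 := Nat.coprime_comm.mp h2
        refine ⟨⟨?_, h1.le⟩, h3⟩
        rcases Nat.eq_zero_or_pos x with rfl | h
        · rw [Nat.gcd_zero_left] at h3; omega
        · exact h
    rw [hTeq]
    exact (Nat.totient_eq_card_coprime Q).symm
  have hAcard := card_A d Q hd hQ hdQ a ha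
  -- total
  have htot : (∑ s ∈ A a, ∑ t ∈ T, (lpr Q ((t:ℤ)-s):ℚ))
      + (∑ s ∈ A (-a), ∑ t ∈ T, (lpr Q ((t:ℤ)-s):ℚ))
      = ((A a).card : ℚ) * ((Q:ℚ) * (Nat.totient Q) + Q) := by
    rw [key, ← Finset.sum_add_distrib, Finset.sum_congr rfl hfinal, Finset.sum_const,
      hTcard]
    rw [nsmul_eq_mul]
  have hφQ : (Nat.totient Q : ℚ) ≠ 0 := by
    have := Nat.totient_pos.mpr (by omega : 0 < Q)
    positivity
  have hφd : (Nat.totient d : ℚ) ≠ 0 := by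
    have := Nat.totient_pos.mpr (by omega : 0 < d)
    positivity
  have hAq : (Nat.totient d : ℚ) * ((A a).card : ℚ) = (Nat.totient Q : ℚ) := by
    exact_mod_cast congrArg (fun n : ℕ => (n : ℚ)) hAcard
  rw [Rstar, Rstar, Rbar, hS a, hS (-a), ← mul_add, htot]
  field_simp
  linear_combination hAq

/-- Anti-symmetry of the bias constants: `R_Q(d;-a) = -R_Q(d;a)`. -/
theorem bias_antisymmetry (d Q : ℕ) (hd : 2 ≤ d) (hQ : 2 ≤ Q) (hdQ : d ∣ Q)
    (a : ℤ) (ha : Int.gcd a d = 1) :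
    Rbias Q d (-a) = - Rbias Q d a := by
  have h := rstar_add d Q hd hQ hdQ a ha
  unfold Rbias
  linarith
end

section
/- Let d ≥ 2 and Q ≥ 2 be integers with d dividing Q, and let a, a' be integers with gcd(a, d) = gcd(a', d) = 1. If a ≡ a' (mod rad(d)), where rad(d) = ∏_{p | d} p is the radical (maximal square-free divisor) of d, then R_Q(d; a) = R_Q(d; a'). -/
/-- The radical (maximal square-free divisor) `rad(d) = ∏_{p ∣ d, p prime} p`. -/
def radical (d : ℕ) : ℕ := ∏ p ∈ d.primeFactors, p


lemma lpr_one_le {Q : ℕ} (hQ : 0 < Q) (n : ℤ) : 1 ≤ lpr Q n := by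
  have hQ' : (Q:ℤ) ≠ 0 := by exact_mod_cast hQ.ne'
  have := Int.emod_nonneg (n - 1) hQ'
  unfold lpr; omega

lemma lpr_le {Q : ℕ} (hQ : 0 < Q) (n : ℤ) : lpr Q n ≤ Q := by
  have hQ' : (0:ℤ) < Q := by exact_mod_cast hQ
  have := Int.emod_lt_of_pos (n - 1) hQ'
  unfold lpr; omega

lemma lpr_emod {Q : ℕ} (n : ℤ) : lpr Q n % Q = n % Q := by
  unfold lpr
  conv_rhs => rw [show n = (n - 1) + 1 by ring]
  rw [Int.add_emod, Int.add_emod (n-1) 1, Int.emod_emod_of_dvd _ dvd_rfl]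

lemma lpr_congr {Q : ℕ} {n m : ℤ} (h : n % Q = m % Q) : lpr Q n = lpr Q m := by
  unfold lpr
  rw [Int.sub_emod, h, ← Int.sub_emod]

lemma lpr_eq_self {Q : ℕ} {n : ℤ} (h1 : 1 ≤ n) (h2 : n ≤ Q) : lpr Q n = n := by
  unfold lpr
  rw [Int.emod_eq_of_lt (by omega) (by omega)]
  ring

lemma gcd_shift {Q : ℕ} (hQ : 0 < Q) {x y : ℤ} (h : (radical Q : ℤ) ∣ (x - y)) :
    Int.gcd x Q = 1 ↔ Int.gcd y Q = 1 := by
  have key : ∀ p : ℕ, p.Prime → p ∣ Q → ((p:ℤ) ∣ x ↔ (p:ℤ) ∣ y) := by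
    intro p pp hpQ
    have hpr : (p:ℕ) ∣ radical Q :=
      Finset.dvd_prod_of_mem _ (Nat.mem_primeFactors.mpr ⟨pp, hpQ, hQ.ne'⟩)
    have hpd : (p:ℤ) ∣ x - y := (Int.natCast_dvd_natCast.mpr hpr).trans h
    constructor
    · intro hx; have := dvd_sub hx hpd; simpa using this
    · intro hy; have := dvd_add hy hpd; simpa using this
  have hx : Int.gcd x Q = Nat.gcd x.natAbs Q := by simp [Int.gcd]
  have hy : Int.gcd y Q = Nat.gcd y.natAbs Q := by simp [Int.gcd]
  rw [hx, hy, ← Nat.coprime_iff_gcd_eq_one, ← Nat.coprime_iff_gcd_eq_one, ← not_iff_not,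
    Nat.Prime.not_coprime_iff_dvd, Nat.Prime.not_coprime_iff_dvd]
  constructor
  · rintro ⟨p, pp, hpx, hpQ⟩
    exact ⟨p, pp, Int.natCast_dvd.mp ((key p pp hpQ).mp (Int.natCast_dvd.mpr hpx)), hpQ⟩
  · rintro ⟨p, pp, hpy, hpQ⟩
    exact ⟨p, pp, Int.natCast_dvd.mp ((key p pp hpQ).mpr (Int.natCast_dvd.mpr hpy)), hpQ⟩

lemma key_inv {Q : ℕ} (hQ : 0 < Q) (b : ℤ) {s : ℕ} (h1 : 1 ≤ s) (h2 : s ≤ Q) :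
    (lpr Q (((lpr Q (s + b)).toNat : ℤ) - b)).toNat = s := by
  have hz1 := lpr_one_le hQ ((s:ℤ) + b)
  have hcast : ((lpr Q ((s:ℤ) + b)).toNat : ℤ) = lpr Q ((s:ℤ) + b) :=
    Int.toNat_of_nonneg (by omega)
  rw [hcast]
  have hc : (lpr Q ((s:ℤ) + b) - b) % Q = (s:ℤ) % Q := by
    rw [Int.sub_emod, lpr_emod, ← Int.sub_emod, add_sub_cancel_right]
  rw [lpr_congr hc, lpr_eq_self (by exact_mod_cast h1) (by exact_mod_cast h2)]
  omega

theorem Rstar_congr (d Q : ℕ) (hd : 2 ≤ d) (hQ : 2 ≤ Q) (hdQ : d ∣ Q)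
    (a a' : ℤ) (hcong : a ≡ a' [ZMOD (radical d)]) :
    Rstar Q d a = Rstar Q d a' := by
  have hQ0 : 0 < Q := by omega
  -- construct b with d ∣ b - (a' - a) and radical Q ∣ b
  have hsub : d.primeFactors ⊆ Q.primeFactors := Nat.primeFactors_mono hdQ hQ0.ne'
  obtain ⟨b, hbd, hbQ⟩ : ∃ b : ℤ, (d:ℤ) ∣ b - (a' - a) ∧ (radical Q : ℤ) ∣ b := by
    set m : ℕ := ∏ p ∈ Q.primeFactors \ d.primeFactors, p with hm
    have hrad : radical d * m = radical Q := by
      rw [hm, radical, radical, mul_comm, Finset.prod_sdiff hsub]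
    have hcop : Nat.Coprime d m := by
      apply Nat.Coprime.prod_right
      intro p hp
      have hps := Finset.mem_sdiff.mp hp
      have pp := Nat.prime_of_mem_primeFactors hps.1
      have hnd : ¬ p ∣ d := fun hpd => hps.2 (Nat.mem_primeFactors.mpr ⟨pp, hpd, by omega⟩)
      exact ((Nat.Prime.coprime_iff_not_dvd pp).mpr hnd).symm
    obtain ⟨u, v, huv⟩ := Nat.isCoprime_iff_coprime.mpr hcop
    have hrd : (radical d : ℤ) ∣ (a' - a) := Int.ModEq.dvd hcong
    obtain ⟨k, hk⟩ := hrd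
    refine ⟨v * m * (a' - a), ⟨-u * (a' - a), ?_⟩, ⟨v * k, ?_⟩⟩
    · have h1 : (v:ℤ) * m = 1 - u * d := by linear_combination huv
      rw [h1]; ring
    · rw [hk, ← hrad]; push_cast; ring
  -- now the reindexing
  unfold Rstar
  congr 1
  rw [← Finset.sum_product', ← Finset.sum_product']
  have hQrad : (radical Q : ℤ) ∣ (Q:ℤ) :=
    Int.natCast_dvd_natCast.mpr (Nat.prod_primeFactors_dvd Q)
  refine Finset.sum_nbij'
    (fun st => ((lpr Q ((st.1 : ℤ) + b)).toNat, (lpr Q ((st.2 : ℤ) + b)).toNat))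
    (fun st => ((lpr Q ((st.1 : ℤ) - b)).toNat, (lpr Q ((st.2 : ℤ) - b)).toNat))
    ?_ ?_ ?_ ?_ ?_
  · rintro ⟨s, t⟩ hst
    simp only [Finset.mem_product, Finset.mem_Icc] at *
    have h1 := lpr_one_le hQ0 ((s:ℤ) + b); have h2 := lpr_le hQ0 ((s:ℤ) + b)
    have h3 := lpr_one_le hQ0 ((t:ℤ) + b); have h4 := lpr_le hQ0 ((t:ℤ) + b)
    omega
  · rintro ⟨s, t⟩ hst
    simp only [Finset.mem_product, Finset.mem_Icc] at *
    have h1 := lpr_one_le hQ0 ((s:ℤ) - b); have h2 := lpr_le hQ0 ((s:ℤ) - b)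
    have h3 := lpr_one_le hQ0 ((t:ℤ) - b); have h4 := lpr_le hQ0 ((t:ℤ) - b)
    omega
  · rintro ⟨s, t⟩ hst
    simp only [Finset.mem_product, Finset.mem_Icc] at hst
    have e1 := key_inv hQ0 b hst.1.1 hst.1.2
    have e2 := key_inv hQ0 b hst.2.1 hst.2.2
    simp only [Prod.mk.injEq]; exact ⟨e1, e2⟩
  · rintro ⟨s, t⟩ hst
    simp only [Finset.mem_product, Finset.mem_Icc] at hst
    have e1 := key_inv hQ0 (-b) hst.1.1 hst.1.2
    have e2 := key_inv hQ0 (-b) hst.2.1 hst.2.2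
    simp only [← sub_eq_add_neg, sub_neg_eq_add] at e1 e2
    simp only [Prod.mk.injEq]; exact ⟨e1, e2⟩
  · rintro ⟨s, t⟩ hst
    simp only [Finset.mem_product, Finset.mem_Icc] at hst
    simp only []
    set σs : ℕ := (lpr Q ((s:ℤ) + b)).toNat with hσs
    set σt : ℕ := (lpr Q ((t:ℤ) + b)).toNat with hσt
    have hσs' : (σs : ℤ) = lpr Q ((s:ℤ) + b) :=
      Int.toNat_of_nonneg (by have := lpr_one_le hQ0 ((s:ℤ)+b); omega)
    have hσt' : (σt : ℤ) = lpr Q ((t:ℤ) + b) :=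
      Int.toNat_of_nonneg (by have := lpr_one_le hQ0 ((t:ℤ)+b); omega)
    have hsQ : (σs : ℤ) ≡ (s:ℤ) + b [ZMOD (Q:ℤ)] := by rw [hσs']; exact lpr_emod _
    have htQ : (σt : ℤ) ≡ (t:ℤ) + b [ZMOD (Q:ℤ)] := by rw [hσt']; exact lpr_emod _
    -- gcd equivalences
    have hshift : ∀ x : ℕ, (x:ℤ) ≡ (x:ℤ) + b - b [ZMOD (Q:ℤ)] := by intro x; simp
    have hgcd : ∀ (x σx : ℕ), ((σx : ℤ) ≡ (x:ℤ) + b [ZMOD (Q:ℤ)]) →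
        (Nat.gcd σx Q = 1 ↔ Nat.gcd x Q = 1) := by
      intro x σx hmod
      have h1 : Int.gcd (σx:ℤ) (Q:ℤ) = Nat.gcd σx Q := by simp [Int.gcd]
      have h2 : Int.gcd (x:ℤ) (Q:ℤ) = Nat.gcd x Q := by simp [Int.gcd]
      rw [← h1, ← h2]
      apply gcd_shift hQ0
      have hdvd : (Q:ℤ) ∣ ((x:ℤ) + b) - (σx:ℤ) := Int.ModEq.dvd hmod
      have hr : (radical Q : ℤ) ∣ ((x:ℤ) + b) - σx := hQrad.trans hdvd
      have : (σx:ℤ) - x = -(((x:ℤ) + b) - σx) + b := by ring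
      rw [this]
      exact dvd_add (dvd_neg.mpr hr) hbQ
    -- congruence mod d equivalence
    have hdQ' : (d:ℤ) ∣ (Q:ℤ) := Int.natCast_dvd_natCast.mpr hdQ
    have hsd : (σs:ℤ) ≡ (s:ℤ) + b [ZMOD (d:ℤ)] := hsQ.of_dvd hdQ'
    have hbd' : b ≡ a' - a [ZMOD (d:ℤ)] := by
      rw [Int.modEq_iff_dvd]
      have : (a' - a) - b = -(b - (a' - a)) := by ring
      rw [this]
      exact dvd_neg.mpr hbd
    have hmodiff : ((σs:ℤ) ≡ a' [ZMOD (d:ℤ)]) ↔ ((s:ℤ) ≡ a [ZMOD (d:ℤ)]) := by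
      constructor
      · intro h
        have h2 := (hsd.symm.trans h).sub hbd'
        have e : (s:ℤ) + b - b = s := by ring
        have e2 : a' - (a' - a) = a := by ring
        rwa [e, e2] at h2
      · intro h
        have h2 := hsd.trans (h.add hbd')
        have e : a + (a' - a) = a' := by ring
        rwa [e] at h2
    -- value equality
    have hlpr : lpr Q ((σt:ℤ) - σs) = lpr Q ((t:ℤ) - s) := by
      apply lpr_congr
      have h2 := htQ.sub hsQ
      have e : (t:ℤ) + b - ((s:ℤ) + b) = (t:ℤ) - s := by ring
      rwa [e] at h2
    have hcond : (Nat.gcd (σs*σt) Q = 1 ∧ (σs:ℤ) ≡ a' [ZMOD (d:ℕ)]) ↔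
        (Nat.gcd (s*t) Q = 1 ∧ (s:ℤ) ≡ a [ZMOD (d:ℕ)]) := by
      apply and_congr _ hmodiff
      show Nat.Coprime (σs*σt) Q ↔ Nat.Coprime (s*t) Q
      rw [Nat.coprime_mul_iff_left, Nat.coprime_mul_iff_left]
      exact and_congr (hgcd s σs hsQ) (hgcd t σt htQ)
    exact (if_congr hcond (by rw [hlpr]) rfl).symm

/-- If `a ≡ a' (mod rad(d))` then `R_Q(d;a) = R_Q(d;a')`. -/
theorem bias_radical_congr (d Q : ℕ) (hd : 2 ≤ d) (hQ : 2 ≤ Q) (hdQ : d ∣ Q)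
    (a a' : ℤ) (ha : Int.gcd a d = 1) (ha' : Int.gcd a' d = 1)
    (hcong : a ≡ a' [ZMOD (radical d)]) :
    Rbias Q d a = Rbias Q d a' := by
  unfold Rbias
  rw [Rstar_congr d Q hd hQ hdQ a a' hcong]
end

section
/- Suppose d, p, Q₀ ≥ 2 are pairwise coprime integers with p prime, set Q = d·Q₀, and let a be an integer with gcd(a, d) = 1. Then (1/φ(d)) · Σ_{s,t = 1,...,pQ, gcd(st, pQ) = 1} ⟨t − s, t − p·a⟩_{pQ₀, d} = Σ_{s = 1,...,pQ, s ≡ p·a (mod d), gcd(s, pQ) = 1} Σ_{t = 1,...,pQ, gcd(t, pQ) = 1} ⟨t − s, t − s⟩_{pQ₀, d}, as an identity of rational numbers, where φ is Euler's totient function. -/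
/-- `⟨n₁, n₂⟩_{Q₁,Q₂}`: the unique integer in `[1, Q₁Q₂]` congruent to `nᵢ` mod `Qᵢ`
(for coprime `Q₁, Q₂`), realized as the least positive common solution. -/
noncomputable def crt2 (Q₁ Q₂ : ℕ) (n₁ n₂ : ℤ) : ℕ :=
  sInf {m : ℕ | 1 ≤ m ∧ (m : ℤ) ≡ n₁ [ZMOD Q₁] ∧ (m : ℤ) ≡ n₂ [ZMOD Q₂]}

/-- `⟨n₁, n₂, n₃⟩_{Q₁,Q₂,Q₃}`: the unique integer in `[1, Q₁Q₂Q₃]` congruent to `nᵢ`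
mod `Qᵢ` (for pairwise coprime `Qᵢ`), realized as the least positive common solution. -/
noncomputable def crt3 (Q₁ Q₂ Q₃ : ℕ) (n₁ n₂ n₃ : ℤ) : ℕ :=
  sInf {m : ℕ | 1 ≤ m ∧ (m : ℤ) ≡ n₁ [ZMOD Q₁] ∧ (m : ℤ) ≡ n₂ [ZMOD Q₂] ∧
    (m : ℤ) ≡ n₃ [ZMOD Q₃]}


private lemma crt2_congr {Q₁ Q₂ : ℕ} {n₁ n₂ m₁ m₂ : ℤ}
    (h1 : n₁ ≡ m₁ [ZMOD (Q₁ : ℤ)]) (h2 : n₂ ≡ m₂ [ZMOD (Q₂ : ℤ)]) :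
    crt2 Q₁ Q₂ n₁ n₂ = crt2 Q₁ Q₂ m₁ m₂ := by
  unfold crt2
  congr 1
  ext m
  simp only [Set.mem_setOf_eq]
  exact and_congr_right fun _ =>
    and_congr ⟨fun h => h.trans h1, fun h => h.trans h1.symm⟩
      ⟨fun h => h.trans h2, fun h => h.trans h2.symm⟩

private lemma crt2_congr' {Q₁ Q₂ : ℕ} {n₁ n₂ m₁ m₂ : ℤ}
    (h1 : (n₁ : ZMod Q₁) = (m₁ : ZMod Q₁)) (h2 : (n₂ : ZMod Q₂) = (m₂ : ZMod Q₂)) :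
    crt2 Q₁ Q₂ n₁ n₂ = crt2 Q₁ Q₂ m₁ m₂ :=
  crt2_congr ((ZMod.intCast_eq_intCast_iff _ _ _).mp h1)
    ((ZMod.intCast_eq_intCast_iff _ _ _).mp h2)

private lemma sum_Icc_zmod {N : ℕ} [NeZero N] (f : ZMod N → ℚ) :
    ∑ s ∈ Finset.Icc 1 N, f (s : ZMod N) = ∑ x : ZMod N, f x := by
  have hN : 0 < N := Nat.pos_of_ne_zero (NeZero.ne N)
  refine Finset.sum_nbij' (fun s => (s : ZMod N)) (fun x => if x = 0 then N else x.val)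
    (fun a _ => Finset.mem_univ _) ?_ ?_ ?_ (fun a _ => rfl)
  · intro x _
    by_cases hx : x = 0
    · simp only [hx, if_pos, Finset.mem_Icc]
      omega
    · simp only [hx, if_neg, Finset.mem_Icc]
      have h1 : x.val ≠ 0 := fun h => hx ((ZMod.val_eq_zero x).mp h)
      exact ⟨Nat.one_le_iff_ne_zero.mpr h1, (ZMod.val_lt x).le⟩
  · intro s hs
    rw [Finset.mem_Icc] at hs
    show (if (s : ZMod N) = 0 then N else (s : ZMod N).val) = s
    by_cases h : (s : ZMod N) = 0
    · rw [if_pos h]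
      have hdvd : N ∣ s := (ZMod.natCast_eq_zero_iff s N).mp h
      have := Nat.le_of_dvd (by omega) hdvd
      omega
    · rw [if_neg h]
      have hlt : s < N := by
        rcases Nat.lt_or_ge s N with h' | h'
        · exact h'
        · exfalso; apply h
          have : s = N := le_antisymm hs.2 h'
          simp [this]
      exact ZMod.val_cast_of_lt hlt
  · intro x _
    show ((if x = 0 then N else x.val : ℕ) : ZMod N) = x
    by_cases hx : x = 0
    · simp [hx]
    · rw [if_neg hx]
      simp [ZMod.natCast_val, ZMod.cast_id]

private lemma isUnit_prod_iff {M N : Type*} [Monoid M] [Monoid N] {x : M × N} :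
    IsUnit x ↔ IsUnit x.1 ∧ IsUnit x.2 := by
  constructor
  · intro h
    exact ⟨h.map (MonoidHom.fst M N), h.map (MonoidHom.snd M N)⟩
  · rintro ⟨⟨u, hu⟩, ⟨v, hv⟩⟩
    refine ⟨⟨(↑u, ↑v), (↑u⁻¹, ↑v⁻¹), ?_, ?_⟩, ?_⟩
    · ext <;> simp
    · ext <;> simp
    · show ((u : M), (v : N)) = x
      obtain ⟨x1, x2⟩ := x
      simp_all

open scoped Classical in
private lemma sum_isUnit_eq_totient (d : ℕ) [NeZero d] :
    (∑ v : ZMod d, if IsUnit v then (1 : ℚ) else 0) = d.totient := by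
  rw [Finset.sum_boole]
  norm_cast
  rw [← Fintype.card_subtype, ← ZMod.card_units_eq_totient d]
  exact (Fintype.card_congr
    (⟨fun x => x.2.unit, fun u => ⟨(u : ZMod d), u.isUnit⟩,
     fun x => Subtype.ext x.2.unit_spec, fun u => Units.ext u.isUnit.unit_spec⟩ :
      {x : ZMod d // IsUnit x} ≃ (ZMod d)ˣ))
open scoped Classical in
private noncomputable def K (Q1 d : ℕ) (b : ℤ) (u : ZMod Q1) (w : ZMod Q1 × ZMod d) : ℚ :=
  if IsUnit u ∧ IsUnit w.1 ∧ IsUnit w.2 then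
    (crt2 Q1 d ((w.1 - u).val : ℤ) ((w.2.val : ℤ) - b) : ℚ)
  else 0

open scoped Classical in
private noncomputable def g1 (Q1 d : ℕ) (b : ℤ) (w w' : ZMod Q1 × ZMod d) : ℚ :=
  if IsUnit w.2 then K Q1 d b w.1 w' else 0

open scoped Classical in
private noncomputable def g2 (Q1 d : ℕ) (b : ℤ) (w w' : ZMod Q1 × ZMod d) : ℚ :=
  if w.2 = (b : ZMod d) then K Q1 d b w.1 w' else 0

private lemma prod_sum_key (Q1 d : ℕ) [NeZero Q1] [NeZero d] (b : ℤ) :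
    ∑ w : ZMod Q1 × ZMod d, ∑ w' : ZMod Q1 × ZMod d, g1 Q1 d b w w'
      = (d.totient : ℚ) * ∑ w : ZMod Q1 × ZMod d, ∑ w' : ZMod Q1 × ZMod d, g2 Q1 d b w w' := by
  classical
  have e1 : ∑ w : ZMod Q1 × ZMod d, ∑ w' : ZMod Q1 × ZMod d, g1 Q1 d b w w'
      = ∑ u : ZMod Q1, ∑ v : ZMod d, ∑ w' : ZMod Q1 × ZMod d, g1 Q1 d b (u, v) w' :=
    Fintype.sum_prod_type _
  have e2 : ∑ w : ZMod Q1 × ZMod d, ∑ w' : ZMod Q1 × ZMod d, g2 Q1 d b w w'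
      = ∑ u : ZMod Q1, ∑ v : ZMod d, ∑ w' : ZMod Q1 × ZMod d, g2 Q1 d b (u, v) w' :=
    Fintype.sum_prod_type _
  rw [e1, e2]
  have h1 : ∀ u : ZMod Q1, ∑ v : ZMod d, ∑ w' : ZMod Q1 × ZMod d, g1 Q1 d b (u, v) w'
      = (d.totient : ℚ) * ∑ w' : ZMod Q1 × ZMod d, K Q1 d b u w' := by
    intro u
    have : ∀ v w', g1 Q1 d b (u, v) w'
        = (if IsUnit v then (1 : ℚ) else 0) * K Q1 d b u w' := by
      intro v w'
      unfold g1
      rw [boole_mul]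
      simp
    simp only [this]
    rw [← Finset.sum_mul_sum, sum_isUnit_eq_totient]
  have h2 : ∀ u : ZMod Q1, ∑ v : ZMod d, ∑ w' : ZMod Q1 × ZMod d, g2 Q1 d b (u, v) w'
      = ∑ w' : ZMod Q1 × ZMod d, K Q1 d b u w' := by
    intro u
    have : ∀ v w', g2 Q1 d b (u, v) w'
        = (if v = (b : ZMod d) then (1 : ℚ) else 0) * K Q1 d b u w' := by
      intro v w'
      unfold g2
      rw [boole_mul]
    simp only [this]
    rw [← Finset.sum_mul_sum]
    rw [Fintype.sum_ite_eq' (b : ZMod d) (fun _ => (1:ℚ)), one_mul]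
  simp only [h1, h2]
  rw [← Finset.mul_sum]

open scoped Classical in
private noncomputable def G1 (Q1 d : ℕ) (b : ℤ) (x y : ZMod (Q1 * d)) : ℚ :=
  if IsUnit x ∧ IsUnit y then
    (crt2 Q1 d ((ZMod.castHom (⟨d, rfl⟩ : Q1 ∣ Q1 * d) (ZMod Q1) (y - x)).val : ℤ)
      (((ZMod.castHom (dvd_mul_left d Q1) (ZMod d) y).val : ℤ) - b) : ℚ)
  else 0

open scoped Classical in
private noncomputable def G2 (Q1 d : ℕ) (b : ℤ) (x y : ZMod (Q1 * d)) : ℚ :=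
  if ZMod.castHom (dvd_mul_left d Q1) (ZMod d) x = (b : ZMod d) ∧ IsUnit x ∧ IsUnit y then
    (crt2 Q1 d ((ZMod.castHom (⟨d, rfl⟩ : Q1 ∣ Q1 * d) (ZMod Q1) (y - x)).val : ℤ)
      ((ZMod.castHom (dvd_mul_left d Q1) (ZMod d) (y - x)).val : ℤ) : ℚ)
  else 0

private lemma key_sum (Q1 d : ℕ) [NeZero Q1] [NeZero d] (hco : Nat.Coprime Q1 d) (b : ℤ)
    (hb : IsUnit ((b : ZMod d))) :
    ∑ x : ZMod (Q1 * d), ∑ y : ZMod (Q1 * d), G1 Q1 d b x y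
      = (d.totient : ℚ) * ∑ x : ZMod (Q1 * d), ∑ y : ZMod (Q1 * d), G2 Q1 d b x y := by
  haveI : NeZero (Q1 * d) := ⟨Nat.mul_ne_zero (NeZero.ne Q1) (NeZero.ne d)⟩
  set φe := ZMod.chineseRemainder hco with hφe
  have hπ₁ : ∀ z : ZMod (Q1 * d),
      ZMod.castHom (⟨d, rfl⟩ : Q1 ∣ Q1 * d) (ZMod Q1) z = (φe z).1 := by
    intro z
    have h : ZMod.castHom (⟨d, rfl⟩ : Q1 ∣ Q1 * d) (ZMod Q1)
        = (RingHom.fst (ZMod Q1) (ZMod d)).comp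
            ((φe : ZMod (Q1 * d) ≃+* ZMod Q1 × ZMod d) : ZMod (Q1 * d) →+* ZMod Q1 × ZMod d) :=
      RingHom.ext_zmod _ _
    rw [h]; rfl
  have hπ₂ : ∀ z : ZMod (Q1 * d),
      ZMod.castHom (dvd_mul_left d Q1) (ZMod d) z = (φe z).2 := by
    intro z
    have h : ZMod.castHom (dvd_mul_left d Q1) (ZMod d)
        = (RingHom.snd (ZMod Q1) (ZMod d)).comp
            ((φe : ZMod (Q1 * d) ≃+* ZMod Q1 × ZMod d) : ZMod (Q1 * d) →+* ZMod Q1 × ZMod d) :=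
      RingHom.ext_zmod _ _
    rw [h]; rfl
  have hu : ∀ x : ZMod (Q1 * d), IsUnit x ↔ IsUnit (φe x).1 ∧ IsUnit (φe x).2 := by
    intro x
    rw [← isUnit_prod_iff]
    exact ⟨fun h => h.map φe, fun h => by simpa using h.map φe.symm⟩
  have hG1 : ∀ x y, G1 Q1 d b x y = g1 Q1 d b (φe x) (φe y) := by
    intro x y
    unfold G1 g1 K
    rw [hπ₁, hπ₂, map_sub, Prod.fst_sub]
    have h1 := hu x
    have h2 := hu y
    split_ifs <;> first | rfl | tauto
  have hG2 : ∀ x y, G2 Q1 d b x y = g2 Q1 d b (φe x) (φe y) := by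
    intro x y
    unfold G2 g2 K
    rw [hπ₁, hπ₂ x, hπ₂ (y - x), map_sub, Prod.fst_sub, Prod.snd_sub]
    have h1 := hu x
    have h2 := hu y
    by_cases hx2 : (φe x).2 = (b : ZMod d)
    · have hval : (crt2 Q1 d (((φe y).1 - (φe x).1).val : ℤ)
            (((φe y).2 - (φe x).2).val : ℤ) : ℚ)
          = (crt2 Q1 d (((φe y).1 - (φe x).1).val : ℤ) (((φe y).2.val : ℤ) - b) : ℚ) := by
        congr 1
        apply crt2_congr' rfl
        rw [hx2]
        push_cast [ZMod.natCast_val, ZMod.cast_id]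
        ring
      rw [hval]
      have hbx : IsUnit (φe x).2 := hx2 ▸ hb
      split_ifs <;> first | rfl | tauto
    · split_ifs <;> first | rfl | tauto
  calc ∑ x : ZMod (Q1 * d), ∑ y : ZMod (Q1 * d), G1 Q1 d b x y
      = ∑ x : ZMod (Q1 * d), ∑ y : ZMod (Q1 * d), g1 Q1 d b (φe x) (φe y) := by
        exact Finset.sum_congr rfl fun x _ => Finset.sum_congr rfl fun y _ => hG1 x y
    _ = ∑ x : ZMod (Q1 * d), ∑ w' : ZMod Q1 × ZMod d, g1 Q1 d b (φe x) w' := by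
        exact Finset.sum_congr rfl fun x _ =>
          Equiv.sum_comp (φe : ZMod (Q1 * d) ≃+* _).toEquiv (g1 Q1 d b (φe x))
    _ = ∑ w : ZMod Q1 × ZMod d, ∑ w' : ZMod Q1 × ZMod d, g1 Q1 d b w w' :=
        Equiv.sum_comp (φe : ZMod (Q1 * d) ≃+* _).toEquiv
          (fun w => ∑ w' : ZMod Q1 × ZMod d, g1 Q1 d b w w')
    _ = (d.totient : ℚ) * ∑ w : ZMod Q1 × ZMod d, ∑ w' : ZMod Q1 × ZMod d, g2 Q1 d b w w' :=
        prod_sum_key Q1 d b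
    _ = (d.totient : ℚ) * ∑ x : ZMod (Q1 * d), ∑ y : ZMod (Q1 * d), G2 Q1 d b x y := by
        congr 1
        have hsum2 : ∑ x : ZMod (Q1 * d), ∑ y : ZMod (Q1 * d), G2 Q1 d b x y
            = ∑ w : ZMod Q1 × ZMod d, ∑ w' : ZMod Q1 × ZMod d, g2 Q1 d b w w' := by
          calc ∑ x : ZMod (Q1 * d), ∑ y : ZMod (Q1 * d), G2 Q1 d b x y
              = ∑ x : ZMod (Q1 * d), ∑ y : ZMod (Q1 * d), g2 Q1 d b (φe x) (φe y) := by
                exact Finset.sum_congr rfl fun x _ => Finset.sum_congr rfl fun y _ => hG2 x y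
            _ = ∑ x : ZMod (Q1 * d), ∑ w' : ZMod Q1 × ZMod d, g2 Q1 d b (φe x) w' := by
                exact Finset.sum_congr rfl fun x _ =>
                  Equiv.sum_comp (φe : ZMod (Q1 * d) ≃+* _).toEquiv (g2 Q1 d b (φe x))
            _ = ∑ w : ZMod Q1 × ZMod d, ∑ w' : ZMod Q1 × ZMod d, g2 Q1 d b w w' :=
                Equiv.sum_comp (φe : ZMod (Q1 * d) ≃+* _).toEquiv
                  (fun w => ∑ w' : ZMod Q1 × ZMod d, g2 Q1 d b w w')
        rw [hsum2]


/-- `(1/φ(d)) Σ_{s,t=1..pQ, gcd(st,pQ)=1} ⟨t-s, t-pa⟩_{pQ₀,d}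
      = Σ_{s=1..pQ, s ≡ pa (mod d), gcd(s,pQ)=1} Σ_{t=1..pQ, gcd(t,pQ)=1} ⟨t-s, t-s⟩_{pQ₀,d}`,
where `Q = dQ₀`. -/
theorem crt_sum_residue_identity (d p Q₀ : ℕ) (hd : 2 ≤ d) (hQ₀ : 2 ≤ Q₀) (hp : p.Prime)
    (h₁ : Nat.Coprime d p) (h₂ : Nat.Coprime d Q₀) (h₃ : Nat.Coprime p Q₀)
    (a : ℤ) (ha : Int.gcd a d = 1) :
    (1 / (Nat.totient d : ℚ)) *
        ∑ s ∈ Finset.Icc 1 (p * (d * Q₀)), ∑ t ∈ Finset.Icc 1 (p * (d * Q₀)),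
          (if Nat.gcd (s * t) (p * (d * Q₀)) = 1 then
            (crt2 (p * Q₀) d ((t : ℤ) - (s : ℤ)) ((t : ℤ) - (p : ℤ) * a) : ℚ) else 0) =
      ∑ s ∈ Finset.Icc 1 (p * (d * Q₀)), ∑ t ∈ Finset.Icc 1 (p * (d * Q₀)),
        (if (s : ℤ) ≡ (p : ℤ) * a [ZMOD d] ∧ Nat.gcd s (p * (d * Q₀)) = 1 ∧
            Nat.gcd t (p * (d * Q₀)) = 1 then
          (crt2 (p * Q₀) d ((t : ℤ) - (s : ℤ)) ((t : ℤ) - (s : ℤ)) : ℚ) else 0) := by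
  rw [show p * (d * Q₀) = p * Q₀ * d from by ring]
  haveI : NeZero d := ⟨by omega⟩
  haveI : NeZero (p * Q₀) := ⟨Nat.mul_ne_zero hp.pos.ne' (by omega)⟩
  haveI : NeZero (p * Q₀ * d) := ⟨Nat.mul_ne_zero (Nat.mul_ne_zero hp.pos.ne' (by omega)) (by omega)⟩
  have hco : Nat.Coprime (p * Q₀) d := Nat.Coprime.mul h₁.symm h₂.symm
  have hb : IsUnit (((p : ℤ) * a : ℤ) : ZMod d) := by
    have hup : IsUnit ((p : ZMod d)) := (ZMod.isUnit_iff_coprime p d).mpr h₁.symm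
    have hua : IsUnit ((a : ZMod d)) := by
      obtain ⟨u, v, huv⟩ := Int.isCoprime_iff_gcd_eq_one.mpr ha
      apply IsUnit.of_mul_eq_one ((u : ℤ) : ZMod d)
      have h' := congrArg (fun z : ℤ => (z : ZMod d)) huv
      push_cast at h'
      rw [ZMod.natCast_self, mul_zero, add_zero] at h'
      rw [mul_comm]
      exact h'
    have hcast : (((p : ℤ) * a : ℤ) : ZMod d) = (p : ZMod d) * ((a : ℤ) : ZMod d) := by
      push_cast; ring
    rw [hcast]
    exact hup.mul hua
  -- pointwise identification, LHS
  have pt1 : ∀ s t : ℕ,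
      (if Nat.gcd (s * t) (p * Q₀ * d) = 1 then
        (crt2 (p * Q₀) d ((t : ℤ) - (s : ℤ)) ((t : ℤ) - (p : ℤ) * a) : ℚ) else 0)
      = G1 (p * Q₀) d ((p : ℤ) * a) (s : ZMod (p * Q₀ * d)) (t : ZMod (p * Q₀ * d)) := by
    intro s t
    unfold G1
    have hcond : Nat.gcd (s * t) (p * Q₀ * d) = 1 ↔
        IsUnit ((s : ZMod (p * Q₀ * d))) ∧ IsUnit ((t : ZMod (p * Q₀ * d))) :=
      (Nat.coprime_mul_iff_left (k := p * Q₀ * d) (m := s) (n := t)).trans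
        (and_congr (ZMod.isUnit_iff_coprime s _).symm (ZMod.isUnit_iff_coprime t _).symm)
    have hval : crt2 (p * Q₀) d ((t : ℤ) - (s : ℤ)) ((t : ℤ) - (p : ℤ) * a)
        = crt2 (p * Q₀) d
            ((ZMod.castHom (⟨d, rfl⟩ : (p * Q₀) ∣ (p * Q₀) * d) (ZMod (p * Q₀))
              ((t : ZMod (p * Q₀ * d)) - (s : ZMod (p * Q₀ * d)))).val : ℤ)
            (((ZMod.castHom (dvd_mul_left d (p * Q₀)) (ZMod d)
              ((t : ZMod (p * Q₀ * d)))).val : ℤ) - (p : ℤ) * a) := by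
      apply crt2_congr'
      · rw [map_sub, map_natCast, map_natCast]
        push_cast [ZMod.natCast_val, ZMod.cast_id]
        ring
      · rw [map_natCast]
        push_cast [ZMod.natCast_val, ZMod.cast_id]
        ring
    rw [hval]
    have h1 := hcond
    split_ifs <;> first | rfl | tauto
  -- pointwise identification, RHS
  have pt2 : ∀ s t : ℕ,
      (if (s : ℤ) ≡ (p : ℤ) * a [ZMOD d] ∧ Nat.gcd s (p * Q₀ * d) = 1 ∧
          Nat.gcd t (p * Q₀ * d) = 1 then
        (crt2 (p * Q₀) d ((t : ℤ) - (s : ℤ)) ((t : ℤ) - (s : ℤ)) : ℚ) else 0)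
      = G2 (p * Q₀) d ((p : ℤ) * a) (s : ZMod (p * Q₀ * d)) (t : ZMod (p * Q₀ * d)) := by
    intro s t
    unfold G2
    have hc1 : ((s : ℤ) ≡ (p : ℤ) * a [ZMOD (d : ℤ)]) ↔
        ZMod.castHom (dvd_mul_left d (p * Q₀)) (ZMod d) (s : ZMod (p * Q₀ * d))
          = (((p : ℤ) * a : ℤ) : ZMod d) := by
      rw [map_natCast, ← ZMod.intCast_eq_intCast_iff]
      push_cast
      rfl
    have hc2 : Nat.gcd s (p * Q₀ * d) = 1 ↔ IsUnit ((s : ZMod (p * Q₀ * d))) :=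
      (ZMod.isUnit_iff_coprime s _).symm
    have hc3 : Nat.gcd t (p * Q₀ * d) = 1 ↔ IsUnit ((t : ZMod (p * Q₀ * d))) :=
      (ZMod.isUnit_iff_coprime t _).symm
    have hval : crt2 (p * Q₀) d ((t : ℤ) - (s : ℤ)) ((t : ℤ) - (s : ℤ))
        = crt2 (p * Q₀) d
            ((ZMod.castHom (⟨d, rfl⟩ : (p * Q₀) ∣ (p * Q₀) * d) (ZMod (p * Q₀))
              ((t : ZMod (p * Q₀ * d)) - (s : ZMod (p * Q₀ * d)))).val : ℤ)
            ((ZMod.castHom (dvd_mul_left d (p * Q₀)) (ZMod d)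
              ((t : ZMod (p * Q₀ * d)) - (s : ZMod (p * Q₀ * d)))).val : ℤ) := by
      apply crt2_congr'
      · rw [map_sub, map_natCast, map_natCast]
        push_cast [ZMod.natCast_val, ZMod.cast_id]
        ring
      · rw [map_sub, map_natCast, map_natCast]
        push_cast [ZMod.natCast_val, ZMod.cast_id]
        ring
    rw [hval]
    split_ifs <;> first | rfl | tauto
  have hL : ∑ s ∈ Finset.Icc 1 (p * Q₀ * d), ∑ t ∈ Finset.Icc 1 (p * Q₀ * d),
        (if Nat.gcd (s * t) (p * Q₀ * d) = 1 then
          (crt2 (p * Q₀) d ((t : ℤ) - (s : ℤ)) ((t : ℤ) - (p : ℤ) * a) : ℚ) else 0)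
      = ∑ x : ZMod (p * Q₀ * d), ∑ y : ZMod (p * Q₀ * d), G1 (p * Q₀) d ((p : ℤ) * a) x y := by
    calc _ = ∑ s ∈ Finset.Icc 1 (p * Q₀ * d), ∑ t ∈ Finset.Icc 1 (p * Q₀ * d),
          G1 (p * Q₀) d ((p : ℤ) * a) (s : ZMod (p * Q₀ * d)) (t : ZMod (p * Q₀ * d)) :=
            Finset.sum_congr rfl fun s _ => Finset.sum_congr rfl fun t _ => pt1 s t
      _ = ∑ s ∈ Finset.Icc 1 (p * Q₀ * d), ∑ y : ZMod (p * Q₀ * d),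
            G1 (p * Q₀) d ((p : ℤ) * a) (s : ZMod (p * Q₀ * d)) y :=
            Finset.sum_congr rfl fun s _ => sum_Icc_zmod _
      _ = _ := sum_Icc_zmod (fun x => ∑ y : ZMod (p * Q₀ * d), G1 (p * Q₀) d ((p : ℤ) * a) x y)
  have hR : ∑ s ∈ Finset.Icc 1 (p * Q₀ * d), ∑ t ∈ Finset.Icc 1 (p * Q₀ * d),
        (if (s : ℤ) ≡ (p : ℤ) * a [ZMOD d] ∧ Nat.gcd s (p * Q₀ * d) = 1 ∧
            Nat.gcd t (p * Q₀ * d) = 1 then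
          (crt2 (p * Q₀) d ((t : ℤ) - (s : ℤ)) ((t : ℤ) - (s : ℤ)) : ℚ) else 0)
      = ∑ x : ZMod (p * Q₀ * d), ∑ y : ZMod (p * Q₀ * d), G2 (p * Q₀) d ((p : ℤ) * a) x y := by
    calc _ = ∑ s ∈ Finset.Icc 1 (p * Q₀ * d), ∑ t ∈ Finset.Icc 1 (p * Q₀ * d),
          G2 (p * Q₀) d ((p : ℤ) * a) (s : ZMod (p * Q₀ * d)) (t : ZMod (p * Q₀ * d)) :=
            Finset.sum_congr rfl fun s _ => Finset.sum_congr rfl fun t _ => pt2 s t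
      _ = ∑ s ∈ Finset.Icc 1 (p * Q₀ * d), ∑ y : ZMod (p * Q₀ * d),
            G2 (p * Q₀) d ((p : ℤ) * a) (s : ZMod (p * Q₀ * d)) y :=
            Finset.sum_congr rfl fun s _ => sum_Icc_zmod _
      _ = _ := sum_Icc_zmod (fun x => ∑ y : ZMod (p * Q₀ * d), G2 (p * Q₀) d ((p : ℤ) * a) x y)
  rw [hL, hR, key_sum (p * Q₀) d hco ((p : ℤ) * a) hb]
  have hφ : (d.totient : ℚ) ≠ 0 :=
    Nat.cast_ne_zero.mpr (Nat.totient_pos.mpr (by omega)).ne'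
  rw [one_div, inv_mul_cancel_left₀ hφ]
end

section
/- Fix an integer Q ≥ 2, a real constant c > 0, and an integer m ≥ 1. For n large enough that the series converges, define H₁^m(n) = Σ_{k ≥ 1} (u_{n+k} − u_n)^m · (1/log u_n − 1/log u_{n+k}) · (1 − c/log u_n)^{k−1}. Then H₁^m(n) = O((log n)^m / n) as n → ∞. -/
open Nat


open Nat

lemma pinf {Q : ℕ} (hQ : 2 ≤ Q) : (setOf (fun m => 0 < m ∧ Nat.Coprime m Q)).Infinite := by
  apply Set.infinite_of_injective_forall_mem (f := fun k : ℕ => k * Q + 1)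
  case hi =>
    intro a b hab
    simp only [add_left_inj] at hab
    exact Nat.eq_of_mul_eq_mul_right (by omega) hab
  case hf =>
    intro k
    refine ⟨by omega, ?_⟩
    simpa [Nat.Coprime] using (Nat.coprime_one_left Q).add_mul_left_left k

lemma gap {Q : ℕ} (hQ : 2 ≤ Q) (i : ℕ) :
    Nat.nth (fun m => 0 < m ∧ Nat.Coprime m Q) (i + 1) ≤
      Nat.nth (fun m => 0 < m ∧ Nat.Coprime m Q) i + Q := by
  set p := fun m => 0 < m ∧ Nat.Coprime m Q with hp
  set a := Nat.nth p i with ha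
  have hQ0 : a % Q < Q := Nat.mod_lt a (by omega)
  have hdm := Nat.div_add_mod a Q
  obtain ⟨j, t, hj1, hjQ', ht⟩ : ∃ j t, 1 ≤ j ∧ j ≤ Q ∧ a + j = Q * t + 1 := by
    rcases Nat.eq_zero_or_pos (a % Q) with h | h
    · exact ⟨1, a / Q, le_refl _, by omega, by omega⟩
    · have hexp : Q * (a / Q + 1) = Q * (a / Q) + Q := by ring
      exact ⟨Q + 1 - a % Q, a / Q + 1, by omega, by omega, by omega⟩
  have hmod : (a + j) % Q = 1 := by
    rw [ht, Nat.mul_add_mod]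
    exact Nat.mod_eq_of_lt (by omega)
  have hpx : p (a + j) := by
    refine ⟨by omega, ?_⟩
    rw [Nat.Coprime, Nat.gcd_comm, Nat.gcd_rec, hmod]
    simp
  by_contra hcon
  push_neg at hcon
  have := Nat.le_nth_of_lt_nth_succ (a := a + j) (k := i) (by omega) hpx
  omega

lemma useq_lb' {Q : ℕ} (hQ : 2 ≤ Q) (n : ℕ) (hn : 1 ≤ n) : n ≤ Nat.nth (fun m => 0 < m ∧ Nat.Coprime m Q) (n-1) := by
  have h1 : ∀ i, i + 1 ≤ Nat.nth (fun m => 0 < m ∧ Nat.Coprime m Q) i := by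
    intro i
    induction i with
    | zero => exact (Nat.nth_mem_of_infinite (pinf hQ) 0).1
    | succ k ih =>
      have := (Nat.nth_lt_nth (pinf hQ) (k := k) (n := k + 1)).2 (by omega)
      omega
  have := h1 (n-1); omega

lemma useq_ub' {Q : ℕ} (hQ : 2 ≤ Q) (n : ℕ) : Nat.nth (fun m => 0 < m ∧ Nat.Coprime m Q) n ≤ Q * n + 1 := by
  induction n with
  | zero =>
    have : Nat.nth (fun m => 0 < m ∧ Nat.Coprime m Q) 0 ≤ 1 := by
      have h1 : (fun m => 0 < m ∧ Nat.Coprime m Q) 1 := ⟨one_pos, Nat.coprime_one_left Q⟩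
      have := Nat.nth_zero (p := fun m => 0 < m ∧ Nat.Coprime m Q)
      rw [this]
      exact csInf_le ⟨0, fun x hx => by omega⟩ h1
    omega
  | succ k ih =>
    have := gap hQ k
    calc Nat.nth (fun m => 0 < m ∧ Nat.Coprime m Q) (k+1)
        ≤ Nat.nth (fun m => 0 < m ∧ Nat.Coprime m Q) k + Q := gap hQ k
      _ ≤ Q * k + 1 + Q := by omega
      _ = Q * (k+1) + 1 := by ring

lemma gapk {Q : ℕ} (hQ : 2 ≤ Q) (i k : ℕ) :
    Nat.nth (fun m => 0 < m ∧ Nat.Coprime m Q) (i + k) ≤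
      Nat.nth (fun m => 0 < m ∧ Nat.Coprime m Q) i + Q * k := by
  induction k with
  | zero => simp
  | succ j ih =>
    have := gap hQ (i + j)
    have h2 : Q * (j + 1) = Q * j + Q := by ring
    have hidx : i + (j + 1) = i + j + 1 := by omega
    rw [hidx]
    omega

/-- `useq Q n` is `u_n`, the `n`-th positive integer coprime to `Q`
(increasing enumeration, `u₁ = 1`). -/
noncomputable def useq (Q : ℕ) (n : ℕ) : ℕ :=
  Nat.nth (fun m => 0 < m ∧ Nat.Coprime m Q) (n - 1)

/-- `H₁^m(n) = Σ_{k ≥ 1} (u_{n+k} - u_n)^m (1/log u_n - 1/log u_{n+k}) (1 - c/log u_n)^{k-1}`. -/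
noncomputable def H1 (Q : ℕ) (c : ℝ) (m : ℕ) (n : ℕ) : ℝ :=
  ∑' k : ℕ,
    ((useq Q (n + (k + 1)) : ℝ) - (useq Q n : ℝ)) ^ m *
      (1 / Real.log (useq Q n) - 1 / Real.log (useq Q (n + (k + 1)))) *
      (1 - c / Real.log (useq Q n)) ^ k

/-- `H₁^m(n) = O((log n)^m / n)`. -/
theorem H1_isBigO (Q : ℕ) (hQ : 2 ≤ Q) (c : ℝ) (hc : 0 < c) (m : ℕ) (hm : 1 ≤ m) :
    (fun n : ℕ => H1 Q c m n) =O[Filter.atTop]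
      fun n : ℕ => (Real.log n) ^ m / (n : ℝ) := by
  have hp := pinf hQ
  rw [Asymptotics.isBigO_iff]
  refine ⟨(Q:ℝ)^(m+1) * (Nat.factorial (m+1)) / c^(m+2) * (Real.log Q + 1)^m, ?_⟩
  have hev : ∀ᶠ n : ℕ in Filter.atTop, max 1 c ≤ Real.log n :=
    (Real.tendsto_log_atTop.comp tendsto_natCast_atTop_atTop).eventually_ge_atTop (max 1 c)
  filter_upwards [hev, Filter.eventually_ge_atTop 3] with n hlogn hn3
  -- basic setup
  have hn1 : 1 ≤ n := by omega
  set a : ℝ := (useq Q n : ℝ) with ha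
  set L : ℝ := Real.log (useq Q n) with hL
  set r : ℝ := 1 - c / L with hr
  have hna : (n : ℝ) ≤ a := by
    simp only [ha, useq]; exact_mod_cast useq_lb' hQ n hn1
  have hn0 : (0:ℝ) < n := by positivity
  have ha0 : (0:ℝ) < a := lt_of_lt_of_le hn0 hna
  have hlogn1 : 1 ≤ Real.log n := le_trans (le_max_left _ _) hlogn
  have hlognc : c ≤ Real.log n := le_trans (le_max_right _ _) hlogn
  have hLn : Real.log n ≤ L := Real.log_le_log hn0 hna
  have hL1 : 1 ≤ L := le_trans hlogn1 hLn
  have hL0 : 0 < L := by linarith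
  have hLc : c ≤ L := le_trans hlognc hLn
  have hr0 : 0 ≤ r := by
    have : c / L ≤ 1 := (div_le_one hL0).2 hLc
    simp [hr]; linarith
  have hr1 : r < 1 := by
    have : 0 < c / L := div_pos hc hL0
    simp [hr]; linarith
  have hrn : ‖r‖ < 1 := by rwa [Real.norm_eq_abs, abs_of_nonneg hr0]
  -- per-index facts
  have hidx : ∀ k : ℕ, useq Q (n + (k+1)) = Nat.nth (fun m => 0 < m ∧ Nat.Coprime m Q) ((n-1) + (k+1)) := by
    intro k; unfold useq; congr 1; omega
  have hgap : ∀ k : ℕ, (useq Q (n + (k+1)) : ℝ) ≤ a + Q * (k+1) := by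
    intro k
    rw [hidx k]
    have := gapk hQ (n-1) (k+1)
    have : (Nat.nth (fun m => 0 < m ∧ Nat.Coprime m Q) ((n-1) + (k+1)) : ℝ)
        ≤ (Nat.nth (fun m => 0 < m ∧ Nat.Coprime m Q) (n-1) : ℝ) + (Q : ℝ) * ((k:ℝ)+1) := by
      push_cast
      exact_mod_cast this
    simpa [ha, useq] using this
  have humono : ∀ k : ℕ, a ≤ (useq Q (n + (k+1)) : ℝ) := by
    intro k
    rw [hidx k]
    have : Nat.nth (fun m => 0 < m ∧ Nat.Coprime m Q) (n-1)
        ≤ Nat.nth (fun m => 0 < m ∧ Nat.Coprime m Q) ((n-1) + (k+1)) :=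
      (Nat.nth_le_nth hp).2 (by omega)
    simp only [ha, useq]
    exact_mod_cast this
  have hL'mono : ∀ k : ℕ, L ≤ Real.log (useq Q (n + (k+1))) := fun k =>
    Real.log_le_log ha0 (humono k)
  -- term bound
  set t : ℕ → ℝ := fun k =>
    ((useq Q (n + (k + 1)) : ℝ) - a) ^ m * (1 / L - 1 / Real.log (useq Q (n + (k + 1)))) * r ^ k with hts
  set g : ℕ → ℝ := fun k =>
    ((Q:ℝ)^(m+1) * (Nat.factorial (m+1)) / (a * L^2)) * ((Nat.choose (k + (m+1)) (m+1) : ℝ) * r ^ k) with hgs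
  have hmid : ∀ k : ℕ, 0 ≤ 1 / L - 1 / Real.log (useq Q (n + (k + 1))) ∧
      1 / L - 1 / Real.log (useq Q (n + (k + 1))) ≤ (Q * ((k:ℝ)+1)) / (a * L^2) := by
    intro k
    have hL' := hL'mono k
    have hL'0 : 0 < Real.log (useq Q (n + (k+1))) := by linarith
    constructor
    · have := one_div_le_one_div_of_le hL0 hL'
      linarith
    · have huu0 : (0:ℝ) < (useq Q (n + (k+1)) : ℝ) := lt_of_lt_of_le ha0 (humono k)
      have hql : Real.log (useq Q (n + (k+1))) - L ≤ (Q * ((k:ℝ)+1)) / a := by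
        have h1 : Real.log (useq Q (n + (k+1))) - L = Real.log ((useq Q (n + (k+1)) : ℝ) / a) := by
          rw [Real.log_div (ne_of_gt huu0) (ne_of_gt ha0)]
        rw [h1]
        have h2 : ((useq Q (n + (k+1)) : ℝ) / a) > 0 := div_pos huu0 ha0
        calc Real.log ((useq Q (n + (k+1)) : ℝ) / a) ≤ (useq Q (n + (k+1)) : ℝ) / a - 1 :=
              Real.log_le_sub_one_of_pos h2
          _ ≤ (Q * ((k:ℝ)+1)) / a := by
              rw [div_sub_one (ne_of_gt ha0), div_le_div_iff₀ ha0 ha0]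
              have := hgap k
              nlinarith
      have key : 1 / L - 1 / Real.log (useq Q (n + (k+1)))
          = (Real.log (useq Q (n + (k+1))) - L) / (L * Real.log (useq Q (n + (k+1)))) := by
        field_simp
      rw [key]
      calc (Real.log (useq Q (n + (k+1))) - L) / (L * Real.log (useq Q (n + (k+1))))
          ≤ (Real.log (useq Q (n + (k+1))) - L) / (L * L) := by
            apply div_le_div_of_nonneg_left ?_ (by positivity) ?_  -- careful: direction
            · linarith
            · exact mul_le_mul_of_nonneg_left hL' (le_of_lt hL0)
        _ ≤ ((Q * ((k:ℝ)+1)) / a) / (L * L) :=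
            (div_le_div_iff_of_pos_right (by positivity)).2 hql
        _ = (Q * ((k:ℝ)+1)) / (a * L^2) := by ring
  -- pointwise bound t ≤ g and nonnegativity
  have ht_nonneg : ∀ k, 0 ≤ t k := by
    intro k
    apply mul_nonneg (mul_nonneg ?_ (hmid k).1) (pow_nonneg hr0 k)
    exact pow_nonneg (by linarith [humono k]) m
  have ht_le : ∀ k, t k ≤ g k := by
    intro k
    have h1 : ((useq Q (n + (k + 1)) : ℝ) - a) ^ m ≤ ((Q:ℝ) * ((k:ℝ)+1)) ^ m :=
      pow_le_pow_left₀ (by linarith [humono k]) (by linarith [hgap k]) m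
    have h3 : t k ≤ ((Q:ℝ) * ((k:ℝ)+1)) ^ m * ((Q * ((k:ℝ)+1)) / (a * L^2)) * r ^ k := by
      apply mul_le_mul_of_nonneg_right ?_ (pow_nonneg hr0 k)
      exact mul_le_mul h1 (hmid k).2 (hmid k).1 (by positivity)
    refine le_trans h3 ?_
    have hfac : ((k:ℝ)+1)^(m+1) ≤ (Nat.factorial (m+1) : ℝ) * (Nat.choose (k + (m+1)) (m+1) : ℝ) := by
      have h := Nat.pow_sub_le_descFactorial (k + (m+1)) (m+1)
      rw [Nat.descFactorial_eq_factorial_mul_choose] at h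
      have h' : (k+1)^(m+1) ≤ Nat.factorial (m+1) * (k + (m+1)).choose (m+1) := by
        have he : k + (m+1) + 1 - (m+1) = k + 1 := by omega
        rwa [he] at h
      exact_mod_cast h'
    have key : ((Q:ℝ) * ((k:ℝ)+1)) ^ m * ((Q * ((k:ℝ)+1)) / (a * L^2)) * r ^ k
        = ((Q:ℝ)^(m+1) / (a * L^2)) * (((k:ℝ)+1)^(m+1)) * r ^ k := by
      rw [show ((Q:ℝ) * ((k:ℝ)+1)) ^ m * ((Q:ℝ) * ((k:ℝ)+1) / (a * L^2)) * r ^ k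
          = ((Q:ℝ) * ((k:ℝ)+1)) ^ (m+1) / (a * L^2) * r ^ k by rw [pow_succ]; ring, mul_pow]
      ring
    have key2 : g k
        = ((Q:ℝ)^(m+1) / (a * L^2)) * ((Nat.factorial (m+1) : ℝ) * (Nat.choose (k + (m+1)) (m+1) : ℝ)) * r ^ k := by
      simp only [hgs]
      ring
    rw [key, key2]
    apply mul_le_mul_of_nonneg_right ?_ (pow_nonneg hr0 k)
    exact mul_le_mul_of_nonneg_left hfac (by positivity)
  -- summability
  have hsum_choose : Summable (fun k : ℕ => (Nat.choose (k + (m+1)) (m+1) : ℝ) * r ^ k) :=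
    summable_choose_mul_geometric_of_norm_lt_one (m+1) hrn
  have hg_sum : Summable g :=
    hsum_choose.mul_left ((Q:ℝ)^(m+1) * (Nat.factorial (m+1)) / (a * L^2))
  have ht_sum : Summable t := Summable.of_nonneg_of_le ht_nonneg ht_le hg_sum
  have hH1 : H1 Q c m n = ∑' k, t k := rfl
  have hnonneg : 0 ≤ H1 Q c m n := by rw [hH1]; exact tsum_nonneg ht_nonneg
  rw [Real.norm_eq_abs, abs_of_nonneg hnonneg, hH1]
  have hle1 : ∑' k, t k ≤ ∑' k, g k := Summable.tsum_le_tsum ht_le ht_sum hg_sum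
  have h1r : 1 - r = c / L := by simp [hr]
  have hC1 : (0:ℝ) < (Q:ℝ)^(m+1) * (Nat.factorial (m+1)) / c^(m+2) := by
    have : (0:ℝ) < Q := by positivity
    positivity
  have hgsum_eq : ∑' k, g k
      = ((Q:ℝ)^(m+1) * (Nat.factorial (m+1)) / c^(m+2)) * (L^m / a) := by
    rw [hgs, tsum_mul_left, tsum_choose_mul_geometric_of_norm_lt_one (m+1) hrn, h1r]
    rw [div_pow, one_div_div]
    have hLne : L ≠ 0 := ne_of_gt hL0
    have hane : a ≠ 0 := ne_of_gt ha0
    have hcne : c ≠ 0 := ne_of_gt hc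
    field_simp
    ring
  -- final estimate
  have hub : a ≤ (Q:ℝ) * n := by
    have h := useq_ub' hQ (n-1)
    have h2 : useq Q n ≤ Q * n := by
      unfold useq
      have : Q * (n-1) + 1 ≤ Q * n := by
        have : Q * n = Q * (n - 1) + Q := by rw [← Nat.mul_succ]; congr 1; omega
        omega
      omega
    rw [ha]
    exact_mod_cast h2
  have hlogQ : (0:ℝ) ≤ Real.log Q := Real.log_nonneg (by exact_mod_cast (by omega : 1 ≤ Q))
  have hLub : L ≤ (Real.log Q + 1) * Real.log n := by
    have h1 : L ≤ Real.log ((Q:ℝ) * n) := Real.log_le_log ha0 hub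
    have h2 : Real.log ((Q:ℝ) * n) = Real.log Q + Real.log n := by
      rw [Real.log_mul (by positivity) (ne_of_gt hn0)]
    nlinarith
  have hL0' : (0:ℝ) ≤ L := le_of_lt hL0
  have hfinal : L^m / a ≤ (Real.log Q + 1)^m * (Real.log n ^ m / n) := by
    have h1 : L^m ≤ ((Real.log Q + 1) * Real.log n)^m := pow_le_pow_left₀ hL0' hLub m
    have h2 : L^m / a ≤ ((Real.log Q + 1) * Real.log n)^m / n := by
      apply div_le_div₀ (by positivity) h1 hn0 hna
    calc L^m / a ≤ ((Real.log Q + 1) * Real.log n)^m / n := h2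
      _ = (Real.log Q + 1)^m * (Real.log n ^ m / n) := by rw [mul_pow]; ring
  have hrhs : ‖Real.log n ^ m / (n:ℝ)‖ = Real.log n ^ m / n := by
    rw [Real.norm_eq_abs, abs_of_nonneg (by positivity)]
  rw [hrhs]
  calc ∑' k, t k ≤ ∑' k, g k := hle1
    _ = ((Q:ℝ)^(m+1) * (Nat.factorial (m+1)) / c^(m+2)) * (L^m / a) := hgsum_eq
    _ ≤ ((Q:ℝ)^(m+1) * (Nat.factorial (m+1)) / c^(m+2)) * ((Real.log Q + 1)^m * (Real.log n ^ m / n)) :=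
        mul_le_mul_of_nonneg_left hfinal (le_of_lt hC1)
    _ = (Q:ℝ)^(m+1) * (Nat.factorial (m+1)) / c^(m+2) * (Real.log Q + 1)^m * (Real.log n ^ m / n) := by
        ring
end
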